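/- The maximum cardinality of a subset of [2]^n = {1,2}^n containing no combinatorial line equals the binomial coefficient C(n, floor(n/2)). -/

import Mathlib

/-- A subset of `[k]^n` (modeled as `Fin n → Fin k`) is line-free if it contains no
combinatorial line: a line is given by a template `w : Fin n → Option (Fin k)` with at
least one wildcard (`none`), yielding the points obtained by substituting each `i : Fin k`
for the wildcard. -/
def LineFree {n k : ℕ} (A : Finset (Fin n → Fin k)) : Prop :=
  ¬ ∃ w : Fin n → Option (Fin k), (∃ j, w j = none) ∧
      ∀ i : Fin k, (fun j => (w j).getD i) ∈ A

namespace SpernerDHJAux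

variable {n : ℕ}

def toSet (a : Fin n → Fin 2) : Finset (Fin n) := Finset.univ.filter (fun j => a j = 1)

def ofSet (S : Finset (Fin n)) : Fin n → Fin 2 := fun j => if j ∈ S then 1 else 0

lemma toSet_ofSet (S : Finset (Fin n)) : toSet (ofSet S) = S := by
  ext j
  simp only [toSet, ofSet, Finset.mem_filter, Finset.mem_univ, true_and]
  by_cases h : j ∈ S <;> simp [h]

lemma ofSet_toSet (a : Fin n → Fin 2) : ofSet (toSet a) = a := by
  funext j
  simp only [toSet, ofSet, Finset.mem_filter, Finset.mem_univ, true_and]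
  split
  · omega
  · omega

lemma toSet_inj : Function.Injective (toSet (n := n)) := by
  intro a b h
  have := congrArg ofSet h
  rwa [ofSet_toSet, ofSet_toSet] at this

end SpernerDHJAux

open SpernerDHJAux in
/-- Sperner's theorem in density Hales-Jewett form: `c_{n,2} = C(n, ⌊n/2⌋)`. -/
theorem sperner_dhj (n : ℕ) :
    IsGreatest {m | ∃ A : Finset (Fin n → Fin 2), LineFree A ∧ A.card = m}
      (n.choose (n / 2)) := by
  constructor
  · -- witness: functions with exactly n/2 ones
    refine ⟨(Finset.univ.powersetCard (n / 2)).image ofSet, ?_, ?_⟩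
    · rintro ⟨w, ⟨j0, hj0⟩, hw⟩
      have h0 := hw 0
      have h1 := hw 1
      simp only [Finset.mem_image, Finset.mem_powersetCard] at h0 h1
      obtain ⟨S, ⟨-, hScard⟩, hS⟩ := h0
      obtain ⟨T, ⟨-, hTcard⟩, hT⟩ := h1
      have hS' : toSet (fun j => (w j).getD 0) = S := by rw [← hS, toSet_ofSet]
      have hT' : toSet (fun j => (w j).getD 1) = T := by rw [← hT, toSet_ofSet]
      have hsub : S ⊆ T := by
        rw [← hS', ← hT']
        intro j hj
        simp only [toSet, Finset.mem_filter, Finset.mem_univ, true_and] at hj ⊢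
        cases hwj : w j with
        | none => rfl
        | some v => rw [hwj] at hj; simpa using hj
      have hmem : j0 ∈ T := by
        rw [← hT']
        simp [toSet, hj0]
      have hnmem : j0 ∉ S := by
        rw [← hS']
        simp [toSet, hj0]
      have : S ⊂ T := ⟨hsub, fun h => hnmem (h hmem)⟩
      have := Finset.card_lt_card this
      omega
    · rw [Finset.card_image_of_injective _ (fun S T h => by
        have := congrArg toSet h; rwa [toSet_ofSet, toSet_ofSet] at this)]
      rw [Finset.card_powersetCard]
      simp
  · rintro m ⟨A, hA, rfl⟩
    classical
    have hanti : IsAntichain (· ⊆ ·) ((A.image toSet : Finset (Finset (Fin n))) : Set (Finset (Fin n))) := by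
      rintro S hS T hT hne hsub
      simp only [Finset.coe_image, Set.mem_image, Finset.mem_coe] at hS hT
      obtain ⟨a, ha, rfl⟩ := hS
      obtain ⟨b, hb, rfl⟩ := hT
      apply hA
      refine ⟨fun j => if j ∈ toSet a then some 1 else if j ∈ toSet b then none else some 0, ?_, ?_⟩
      · obtain ⟨j, hjb, hja⟩ := Finset.exists_of_ssubset ⟨hsub, fun h =>
          hne (le_antisymm hsub h)⟩
        exact ⟨j, by simp [hja, hjb]⟩
      · intro i
        fin_cases i
        · have : (fun j => ((if j ∈ toSet a then some 1 else if j ∈ toSet b then none else some 0) : Option (Fin 2)).getD 0) = a := by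
            funext j
            by_cases hja : j ∈ toSet a
            · simp only [toSet, Finset.mem_filter, Finset.mem_univ, true_and] at hja
              simp [toSet, hja]
            · have : a j = 0 := by
                simp only [toSet, Finset.mem_filter, Finset.mem_univ, true_and] at hja
                omega
              by_cases hjb : j ∈ toSet b <;> simp [hja, hjb, this]
          convert ha using 1
          exact this
        · have : (fun j => ((if j ∈ toSet a then some 1 else if j ∈ toSet b then none else some 0) : Option (Fin 2)).getD 1) = b := by
            funext j
            by_cases hjb : j ∈ toSet b
            · have hb1 : b j = 1 := by
                simpa [toSet] using hjb
              by_cases hja : j ∈ toSet a <;> simp [hja, hjb, hb1]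
            · have hja : j ∉ toSet a := fun h => hjb (hsub h)
              have : b j = 0 := by
                simp only [toSet, Finset.mem_filter, Finset.mem_univ, true_and] at hjb
                omega
              simp [hja, hjb, this]
          convert hb using 1
          exact this
    have := IsAntichain.sperner hanti
    rw [Finset.card_image_of_injective _ toSet_inj] at this
    simpa using this
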